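/- Let a, b, c, d, p, q, r be positive real numbers with q > p·r and y* := q/p − r < a, and set x* := (1−a)/2 + √(((1+a)/2)² − y*) and z* := (c·x*/(a+x*) − b)·(y* + d). If (x, y, z) is any point with x > 0, y > 0, z > 0 satisfying x(1−x) − xy/(x+a) = 0, cxy/(x+a) − by − yz/(y+d) = 0, and pz² − qz²/(y+r) = 0, then (x, y, z) = (x*, y*, z*). In particular the interior (componentwise positive) equilibrium of the system is unique. -/
import Mathlib


/-- Uniqueness of the interior (componentwise positive) equilibrium of the rescaled
Leslie–Gower tritrophic food chain system: any positive equilibrium coincides with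
`(x*, y*, z*)`. -/
theorem interior_equilibrium_unique
    (a b c d p q r : ℝ)
    (ha : 0 < a) (hb : 0 < b) (hc : 0 < c) (hd : 0 < d)
    (hp : 0 < p) (hq : 0 < q) (hr : 0 < r)
    (hqpr : q > p * r)
    (ystar : ℝ) (hy : ystar = q / p - r)
    (hya : ystar < a)
    (xstar : ℝ) (hx : xstar = (1 - a) / 2 + Real.sqrt (((1 + a) / 2) ^ 2 - ystar))
    (zstar : ℝ) (hz : zstar = (c * xstar / (a + xstar) - b) * (ystar + d))
    (x y z : ℝ) (hxpos : 0 < x) (hypos : 0 < y) (hzpos : 0 < z)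
    (heq1 : x * (1 - x) - x * y / (x + a) = 0)
    (heq2 : c * x * y / (x + a) - b * y - y * z / (y + d) = 0)
    (heq3 : p * z ^ 2 - q * z ^ 2 / (y + r) = 0) :
    (x, y, z) = (xstar, ystar, zstar) := by
  have hyr : (0:ℝ) < y + r := by linarith
  have hxa : (0:ℝ) < x + a := by linarith
  have hyd : (0:ℝ) < y + d := by linarith
  -- Step 1: y = ystar
  have h3 : p * z ^ 2 * (y + r) = q * z ^ 2 := by
    field_simp [hyr.ne'] at heq3
    linarith
  have hpy : p * (y + r) = q := by
    have hz2 : z ^ 2 ≠ 0 := pow_ne_zero _ hzpos.ne'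
    have : (p * (y + r)) * z ^ 2 = q * z ^ 2 := by ring_nf; ring_nf at h3; linarith
    exact mul_right_cancel₀ hz2 this
  have hyeq : y = ystar := by
    rw [hy]
    field_simp
    linarith
  -- Step 2: x = xstar
  have hq1 : (1 - x) * (x + a) = y := by
    have h1 : x * ((1 - x) * (x + a)) = x * y := by
      field_simp [hxa.ne'] at heq1
      linear_combination heq1
    exact mul_left_cancel₀ hxpos.ne' h1
  set s := Real.sqrt (((1 + a) / 2) ^ 2 - ystar) with hsdef
  have hrad : (0:ℝ) ≤ ((1 + a) / 2) ^ 2 - ystar := by nlinarith [sq_nonneg (1 - a)]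
  have hs0 : 0 ≤ s := Real.sqrt_nonneg _
  have hs2 : s ^ 2 = ((1 + a) / 2) ^ 2 - ystar := Real.sq_sqrt hrad
  have hq1' : (1 - x) * (x + a) = ystar := by rw [← hyeq]; exact hq1
  have hfac : (x - (1 - a) / 2 - s) * (x - (1 - a) / 2 + s) = 0 := by
    have hsq : (x - (1 - a) / 2) ^ 2 = s ^ 2 := by
      rw [hs2]; linear_combination -hq1'
    linear_combination hsq
  have hxeq : x = xstar := by
    rw [hx]
    rcases mul_eq_zero.mp hfac with h | h
    · linarith
    · -- x = (1-a)/2 - s : contradiction with x > 0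
      exfalso
      have hxv : x = (1 - a) / 2 - s := by linarith
      have hprod : ((1 - a) / 2 - s) * ((1 - a) / 2 + s) = ystar - a := by
        linear_combination -hs2
      nlinarith [hxv, hprod, hs0]
  -- Step 3: z = zstar
  have hzeq : z = zstar := by
    have h2 : y * (z * (x + a)) = y * ((c * x - b * (x + a)) * (y + d)) := by
      field_simp [hxa.ne', hyd.ne'] at heq2
      linear_combination -heq2
    have h2' : z * (x + a) = (c * x - b * (x + a)) * (y + d) :=
      mul_left_cancel₀ hypos.ne' h2
    rw [hz, ← hxeq, ← hyeq]
    have hax : a + x ≠ 0 := by linarith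
    field_simp
    linear_combination h2'
  rw [hxeq, hyeq, hzeq]
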